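/- Let G be a group with a choice of generators w ↦ w̄ from W whose gross cogrowth satisfies θ < 1 (i.e., G is non-amenable). Then for every ε > 0, the set of words w such that every contiguous subword v of the concatenation ww with |w| ≥ |v| ≥ ε·|w| satisfies |v̄| ≥ ((1−θ)/θ − ε)·|v| is exponentially generic. -/

import Mathlib

open Filter

namespace GenericSubgroups

/-- A word over the alphabet `Fin m × Bool` (generator index, with `true` = formal inverse). -/
abbrev Word (m : ℕ) := List (Fin m × Bool)

/-- The disk of radius `n` : words of length at most `n`. -/
def ball (m n : ℕ) : Set (Word m) := {w | w.length ≤ n}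

/-- The sphere of radius `n` : words of length exactly `n`. -/
def sphere (m n : ℕ) : Set (Word m) := {w | w.length = n}

/-- A set of words is exponentially negligible. -/
def ExpNegligible {m : ℕ} (X : Set (Word m)) : Prop :=
  ∃ α : ℝ, 0 < α ∧ α < 1 ∧
    ∀ᶠ n in atTop, ((X ∩ ball m n).ncard : ℝ) / ((ball m n).ncard : ℝ) ≤ α ^ n

/-- A set of words is exponentially generic if its complement is exponentially negligible. -/
def ExpGeneric {m : ℕ} (X : Set (Word m)) : Prop := ExpNegligible Xᶜ

/-- Disk of radius `n` in the set of `k`-tuples of words. -/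
def ballK (m k n : ℕ) : Set (Fin k → Word m) := {w | ∀ i, (w i).length ≤ n}

def ExpNegligibleK {m k : ℕ} (X : Set (Fin k → Word m)) : Prop :=
  ∃ α : ℝ, 0 < α ∧ α < 1 ∧
    ∀ᶠ n in atTop, ((X ∩ ballK m k n).ncard : ℝ) / ((ballK m k n).ncard : ℝ) ≤ α ^ n

def ExpGenericK {m k : ℕ} (X : Set (Fin k → Word m)) : Prop := ExpNegligibleK Xᶜ

variable {G : Type*} [Group G]

/-- Evaluation of a word in `G`, determined by the family `g` of generators. -/
def eval {m : ℕ} (g : Fin m → G) (w : Word m) : G :=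
  (w.map (fun p => if p.2 then (g p.1)⁻¹ else g p.1)).prod

/-- Word length of an element of `G`. -/
noncomputable def wlen {m : ℕ} (g : Fin m → G) (x : G) : ℕ :=
  sInf {n | ∃ w : Word m, w.length = n ∧ eval g w = x}

/-- Word metric on `G`. -/
noncomputable def wdist {m : ℕ} (g : Fin m → G) (x y : G) : ℕ := wlen g (x⁻¹ * y)

/-- Words of length exactly `n` representing the identity. -/
def V {m : ℕ} (g : Fin m → G) (n : ℕ) : Set (Word m) :=
  {w | w.length = n ∧ eval g w = 1}

/-- The gross cogrowth `θ = limsup (1/n) log_{2m} |V_n|`. -/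
noncomputable def cogrowth {m : ℕ} (g : Fin m → G) : ℝ :=
  limsup (fun n : ℕ => Real.logb (2 * m : ℝ) ((V g n).ncard : ℝ) / (n : ℝ)) atTop

/-- The four-point (quadrilateral) condition with constant `δ` for the word metric. -/
def FourPoint {m : ℕ} (g : Fin m → G) (δ : ℝ) : Prop :=
  ∀ p q r s : G,
    (wdist g p s : ℝ) + (wdist g q r : ℝ) ≤
      2 * δ + max ((wdist g p q : ℝ) + (wdist g r s : ℝ)) ((wdist g p r : ℝ) + (wdist g q s : ℝ))

/-- The Gromov product `(x|y)_1` with respect to the word metric. -/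
noncomputable def gp {m : ℕ} (g : Fin m → G) (x y : G) : ℝ :=
  ((wlen g x : ℝ) + (wlen g y : ℝ) - (wlen g (x⁻¹ * y) : ℝ)) / 2

/-- `x^e` where `e : Bool`, `true` meaning inverse. -/
def powB (x : G) (e : Bool) : G := if e then x⁻¹ else x

/-- Formal inverse of a word. -/
def winv {m : ℕ} (w : Word m) : Word m := (w.reverse).map (fun p => (p.1, !p.2))


-- ## Counting infrastructure

lemma ncard_biUnion_le {α : Type*} (s : Finset ℕ) (f : ℕ → Set α) :
    (⋃ i ∈ s, f i).ncard ≤ ∑ i ∈ s, (f i).ncard := by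
  classical
  induction s using Finset.induction with
  | empty => simp
  | @insert a s ha ih =>
      rw [Finset.set_biUnion_insert, Finset.sum_insert ha]
      exact le_trans (Set.ncard_union_le _ _) (Nat.add_le_add_left ih _)

lemma ncard_prod {α β : Type*} (s : Set α) (t : Set β) :
    (s ×ˢ t).ncard = s.ncard * t.ncard := by
  rw [← Nat.card_coe_set_eq, ← Nat.card_coe_set_eq, ← Nat.card_coe_set_eq]
  rw [Nat.card_congr (Equiv.Set.prod s t), Nat.card_prod]

lemma ncard_sphere (m k : ℕ) : (sphere m k).ncard = (2 * m) ^ k := by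
  rw [← Nat.card_coe_set_eq]
  have h2 : Nat.card (sphere m k) = Nat.card (List.Vector (Fin m × Bool) k) := rfl
  rw [h2, Nat.card_eq_fintype_card, card_vector, Fintype.card_prod, Fintype.card_fin,
    Fintype.card_bool, mul_comm]

lemma sphere_finite (m k : ℕ) : (sphere m k).Finite := List.finite_length_eq _ k
lemma ball_finite (m n : ℕ) : (ball m n).Finite := List.finite_length_le _ n

lemma ball_card_lower (m n : ℕ) : (2 * m) ^ n ≤ (ball m n).ncard := by
  rw [← ncard_sphere m n]
  exact Set.ncard_le_ncard (fun w hw => le_of_eq hw) (ball_finite m n)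

-- ## eval lemmas

lemma eval_append {m : ℕ} (g : Fin m → G) (a b : Word m) :
    eval g (a ++ b) = eval g a * eval g b := by
  simp [eval]

lemma eval_winv {m : ℕ} (g : Fin m → G) (w : Word m) :
    eval g (winv w) = (eval g w)⁻¹ := by
  induction w with
  | nil => simp [eval, winv]
  | cons p t ih =>
      have h : winv (p :: t) = winv t ++ [(p.1, !p.2)] := by simp [winv]
      rw [h, eval_append, ih]
      obtain ⟨a, e⟩ := p
      cases e <;> simp [eval, mul_inv_rev]

lemma winv_length {m : ℕ} (w : Word m) : (winv w).length = w.length := by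
  simp [winv]

lemma exists_rep {m : ℕ} (g : Fin m → G) (v : Word m) :
    ∃ z : Word m, z.length = wlen g (eval g v) ∧ eval g z = eval g v := by
  have hne : {n | ∃ w : Word m, w.length = n ∧ eval g w = eval g v}.Nonempty :=
    ⟨v.length, v, rfl, rfl⟩
  exact Nat.sInf_mem hne

lemma V_card_le {m : ℕ} (g : Fin m → G) (n : ℕ) : (V g n).ncard ≤ (2 * m) ^ n := by
  rw [← ncard_sphere m n]
  exact Set.ncard_le_ncard (fun w hw => hw.1) (sphere_finite m n)

lemma V_finite {m : ℕ} (g : Fin m → G) (n : ℕ) : (V g n).Finite :=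
  (sphere_finite m n).subset (fun w hw => hw.1)

-- ## cogrowth extraction

lemma eventually_V_bound {m : ℕ} (hm : 2 ≤ m) (g : Fin m → G) {θ' : ℝ}
    (h : cogrowth g < θ') :
    ∀ᶠ n in atTop, ((V g n).ncard : ℝ) ≤ (2 * m : ℝ) ^ (θ' * n) := by
  have hb : (1 : ℝ) < 2 * m := by
    have : (2:ℝ) ≤ m := by exact_mod_cast hm
    nlinarith
  have hbd : IsBoundedUnder (· ≤ ·) atTop
      (fun n : ℕ => Real.logb (2 * m : ℝ) ((V g n).ncard : ℝ) / (n : ℝ)) := by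
    refine isBoundedUnder_of ⟨1, fun n => ?_⟩
    rcases Nat.eq_zero_or_pos n with h0 | h0
    · simp [h0]
    · have hn : (0:ℝ) < n := by exact_mod_cast h0
      rw [div_le_one hn]
      rcases eq_or_ne ((V g n).ncard) 0 with hV | hV
      · simp [hV]
      · have hV1 : (1:ℝ) ≤ ((V g n).ncard : ℝ) := by
          exact_mod_cast Nat.one_le_iff_ne_zero.2 hV
        have hle : ((V g n).ncard : ℝ) ≤ (2*m:ℝ) ^ (n:ℕ) := by
          exact_mod_cast V_card_le g n
        calc Real.logb (2*m) ((V g n).ncard : ℝ) ≤ Real.logb (2*m) ((2*m:ℝ) ^ (n:ℕ)) := by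
              apply Real.logb_le_logb_of_le hb (by linarith) hle
          _ = n := by
              rw [← Real.rpow_natCast (2*m:ℝ) n, Real.logb_rpow (by linarith)]
              exact ne_of_gt hb
  have hev := eventually_lt_of_limsup_lt h hbd
  filter_upwards [hev, eventually_ge_atTop 1] with n hn hn1
  have hnpos : (0:ℝ) < n := by exact_mod_cast hn1
  rcases eq_or_ne ((V g n).ncard) 0 with hV | hV
  · rw [hV]
    push_cast
    positivity
  · have hVpos : (0:ℝ) < ((V g n).ncard : ℝ) := by
      exact_mod_cast Nat.pos_of_ne_zero hV
    have : Real.logb (2*m) ((V g n).ncard : ℝ) < θ' * n := by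
      rw [div_lt_iff₀ hnpos] at hn
      linarith [hn]
    exact le_of_lt ((Real.logb_lt_iff_lt_rpow hb hVpos).1 this)



/-- Words of length `k` (with `lo ≤ k`) whose evaluation is short. -/
def BadV {m : ℕ} (g : Fin m → G) (c lo : ℝ) (k : ℕ) : Set (Word m) :=
  {v | v.length = k ∧ lo ≤ (k : ℝ) ∧ ((wlen g (eval g v) : ℝ) < c * k)}

lemma BadV_finite {m : ℕ} (g : Fin m → G) (c lo : ℝ) (k : ℕ) : (BadV g c lo k).Finite :=
  (sphere_finite m k).subset (fun v hv => hv.1)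

lemma BadV_card_le {m : ℕ} (g : Fin m → G) (c lo : ℝ) (k : ℕ) :
    (BadV g c lo k).ncard ≤ ∑ l ∈ Finset.range (⌊c * k⌋₊ + 1), (V g (k + l)).ncard := by
  classical
  have hsub : BadV g c lo k ⊆
      ⋃ l ∈ Finset.range (⌊c * k⌋₊ + 1),
        {v | v ∈ BadV g c lo k ∧ wlen g (eval g v) = l} := by
    intro v hv
    refine Set.mem_biUnion ?_ ⟨hv, rfl⟩
    show wlen g (eval g v) ∈ Finset.range (⌊c * k⌋₊ + 1)
    rw [Finset.mem_range, Nat.lt_succ_iff]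
    exact Nat.le_floor (le_of_lt (by simpa [hv.1] using hv.2.2))
  refine le_trans (Set.ncard_le_ncard hsub ?_) ?_
  · exact Set.Finite.biUnion (Finset.finite_toSet _)
      (fun l _ => (BadV_finite g c lo k).subset (fun v hv => hv.1))
  refine le_trans (ncard_biUnion_le _ _) (Finset.sum_le_sum (fun l _ => ?_))
  refine Set.ncard_le_ncard_of_injOn
    (fun v => v ++ winv (Classical.choose (exists_rep g v))) ?_ ?_ (V_finite g (k + l))
  · rintro v ⟨⟨hlen, -, -⟩, hwl⟩
    obtain ⟨hzl, hze⟩ := Classical.choose_spec (exists_rep g v)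
    constructor
    · rw [List.length_append, winv_length, hzl, hwl, hlen]
    · rw [eval_append, eval_winv, hze, mul_inv_cancel]
  · intro v1 h1 v2 h2 he
    replace he : v1 ++ winv (Classical.choose (exists_rep g v1)) =
        v2 ++ winv (Classical.choose (exists_rep g v2)) := he
    calc v1 = (v1 ++ winv (Classical.choose (exists_rep g v1))).take k :=
          (List.take_left' h1.1.1).symm
    _ = (v2 ++ winv (Classical.choose (exists_rep g v2))).take k := by rw [he]
    _ = v2 := List.take_left' h2.1.1

/-- Reconstruction map. -/
def recon {m : ℕ} (q : (Bool × ℕ) × Word m × Word m) : Word m :=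
  if q.1.1 then q.2.1.drop q.1.2 ++ q.2.2 ++ q.2.1.take q.1.2
  else q.2.2.take q.1.2 ++ q.2.1 ++ q.2.2.drop q.1.2

def SL {m : ℕ} (g : Fin m → G) (c ε : ℝ) (L : ℕ) : Set ((Bool × ℕ) × Word m × Word m) :=
  {q | q.1.2 ≤ L ∧ q.2.1.length ≤ L ∧ q.2.1 ∈ BadV g c (ε * L) q.2.1.length ∧
       q.2.2.length = L - q.2.1.length}

lemma SL_subset {m : ℕ} (g : Fin m → G) (c ε : ℝ) (L : ℕ) :
    SL g c ε L ⊆ ((Set.univ : Set Bool) ×ˢ Set.Iic L) ×ˢ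
      (⋃ k ∈ Finset.range (L + 1), (BadV g c (ε * L) k) ×ˢ (sphere m (L - k))) := by
  rintro ⟨⟨b, j⟩, z, r⟩ ⟨hj, hzL, hz, hr⟩
  refine ⟨⟨trivial, hj⟩, ?_⟩
  refine Set.mem_biUnion ?_ ⟨hz, hr⟩
  show z.length ∈ Finset.range (L + 1)
  rw [Finset.mem_range, Nat.lt_succ_iff]
  exact hzL

lemma SL_finite {m : ℕ} (g : Fin m → G) (c ε : ℝ) (L : ℕ) : (SL g c ε L).Finite := by
  refine Set.Finite.subset ?_ (SL_subset g c ε L)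
  refine Set.Finite.prod (Set.Finite.prod (Set.finite_univ) (Set.finite_Iic L)) ?_
  exact Set.Finite.biUnion (Finset.finite_toSet _)
    (fun k _ => (BadV_finite g c (ε * L) k).prod (sphere_finite m (L - k)))

lemma SL_card_le {m : ℕ} (g : Fin m → G) (c ε : ℝ) (L : ℕ) :
    (SL g c ε L).ncard ≤
      2 * (L + 1) * ∑ k ∈ Finset.range (L + 1),
        (BadV g c (ε * L) k).ncard * (2 * m) ^ (L - k) := by
  classical
  have hTfin : (⋃ k ∈ Finset.range (L + 1),
      (BadV g c (ε * L) k) ×ˢ (sphere m (L - k))).Finite :=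
    Set.Finite.biUnion (Finset.finite_toSet _)
      (fun k _ => (BadV_finite g c (ε * L) k).prod (sphere_finite m (L - k)))
  calc (SL g c ε L).ncard
      ≤ (((Set.univ : Set Bool) ×ˢ Set.Iic L) ×ˢ
          (⋃ k ∈ Finset.range (L + 1), (BadV g c (ε * L) k) ×ˢ (sphere m (L - k)))).ncard :=
        Set.ncard_le_ncard (SL_subset g c ε L)
          (((Set.finite_univ).prod (Set.finite_Iic L)).prod hTfin)
    _ = 2 * (L + 1) * (⋃ k ∈ Finset.range (L + 1),
          (BadV g c (ε * L) k) ×ˢ (sphere m (L - k))).ncard := by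
        rw [ncard_prod, ncard_prod, Set.ncard_univ, Nat.card_eq_fintype_card,
          Fintype.card_bool, ← Finset.coe_Iic, Set.ncard_coe_finset, Nat.card_Iic]
    _ ≤ 2 * (L + 1) * ∑ k ∈ Finset.range (L + 1),
          (BadV g c (ε * L) k).ncard * (2 * m) ^ (L - k) := by
        refine Nat.mul_le_mul_left _ ?_
        refine le_trans (ncard_biUnion_le _ _) (Finset.sum_le_sum (fun k _ => ?_))
        rw [ncard_prod, ncard_sphere]



lemma decomp {m : ℕ} (g : Fin m → G) (c ε : ℝ) (L : ℕ) (w : Word m) (hw : w.length = L)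
    (u v u' : Word m) (he : w ++ w = u ++ v ++ u') (hk : v.length ≤ w.length)
    (hlo : ε * (w.length : ℝ) ≤ (v.length : ℝ))
    (hshort : (wlen g (eval g v) : ℝ) < c * v.length) :
    w ∈ recon '' SL g c ε L := by
  have hkL : v.length ≤ L := hw ▸ hk
  have hlo' : ε * (L : ℝ) ≤ (v.length : ℝ) := by rw [← hw]; exact hlo
  have hv : v = ((w ++ w).drop u.length).take v.length := by
    rw [he, List.append_assoc, List.drop_left, List.take_left]
  have hlen2 : L + L = u.length + v.length + u'.length := by
    have h := congrArg List.length he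
    simp only [List.length_append, hw] at h
    omega
  have KEY : ∀ j n : ℕ, w.take j ++ ((w.drop j).take n ++ w.drop (j + n)) = w := by
    intro j n
    rw [List.drop_take_append_drop, List.take_append_drop]
  -- Case A helper: v sits inside a single copy of w
  have CA : ∀ j : ℕ, j + v.length ≤ L → v = (w.drop j).take v.length →
      w ∈ recon '' SL g c ε L := by
    intro j hj hvv
    refine ⟨((false, j), v, w.take j ++ w.drop (j + v.length)), ⟨?_, ?_, ?_, ?_⟩, ?_⟩
    · show j ≤ L
      omega
    · exact hkL
    · exact ⟨rfl, hlo', hshort⟩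
    · show (w.take j ++ w.drop (j + v.length)).length = L - v.length
      simp only [List.length_append, List.length_take, List.length_drop, hw]
      omega
    · show (w.take j ++ w.drop (j + v.length)).take j ++ v ++
        (w.take j ++ w.drop (j + v.length)).drop j = w
      rw [List.take_left' (by rw [List.length_take]; omega),
        List.drop_left' (by rw [List.length_take]; omega)]
      have h := KEY j v.length
      rw [← List.append_assoc] at h
      rw [← hvv] at h
      exact h
  rcases le_or_gt (u.length + v.length) L with h1 | h1
  · -- entirely in the first copy
    refine CA u.length h1 ?_
    conv_lhs => rw [hv]
    rw [List.drop_append_of_le_length (by omega),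
      List.take_append_of_le_length (by rw [List.length_drop]; omega)]
  rcases le_or_gt L u.length with h2 | h2
  · -- entirely in the second copy
    refine CA (u.length - L) (by omega) ?_
    conv_lhs => rw [hv]
    congr 1
    conv_lhs => rw [show u.length = w.length + (u.length - L) from by omega]
    exact List.drop_length_add_append _
  · -- wrap-around case
    have hsL : L - u.length ≤ v.length := by omega
    have hsplit : v = w.drop u.length ++ w.take (u.length + v.length - L) := by
      conv_lhs => rw [hv]
      rw [List.drop_append_of_le_length (by omega), List.take_append,
        List.take_of_length_le (by rw [List.length_drop]; omega)]
      congr 1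
      congr 1
      rw [List.length_drop]
      omega
    refine ⟨((true, L - u.length), v,
      (w.drop (u.length + v.length - L)).take (L - v.length)), ⟨?_, ?_, ?_, ?_⟩, ?_⟩
    · show L - u.length ≤ L
      omega
    · exact hkL
    · exact ⟨rfl, hlo', hshort⟩
    · show ((w.drop (u.length + v.length - L)).take (L - v.length)).length = L - v.length
      simp only [List.length_take, List.length_drop, hw]
      omega
    · show v.drop (L - u.length) ++ (w.drop (u.length + v.length - L)).take (L - v.length) ++
        v.take (L - u.length) = w
      have hds : v.drop (L - u.length) = w.take (u.length + v.length - L) := by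
        conv_lhs => rw [hsplit]
        exact List.drop_left' (by rw [List.length_drop]; omega)
      have hts : v.take (L - u.length) = w.drop u.length := by
        conv_lhs => rw [hsplit]
        exact List.take_left' (by rw [List.length_drop]; omega)
      rw [hds, hts]
      have h := KEY (u.length + v.length - L) (L - v.length)
      rw [← List.append_assoc] at h
      rw [show u.length + v.length - L + (L - v.length) = u.length from by omega] at h
      exact h



def Bad {m : ℕ} (g : Fin m → G) (c ε : ℝ) : Set (Word m) :=
  {w | ∃ u v u' : Word m, w ++ w = u ++ v ++ u' ∧ v.length ≤ w.length ∧
    ε * (w.length : ℝ) ≤ (v.length : ℝ) ∧ (wlen g (eval g v) : ℝ) < c * v.length}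

lemma bad_sphere_card_le {m : ℕ} (g : Fin m → G) (c ε : ℝ) (L : ℕ) :
    ((Bad g c ε) ∩ sphere m L).ncard ≤
      2 * (L + 1) * ∑ k ∈ Finset.range (L + 1),
        (BadV g c (ε * L) k).ncard * (2 * m) ^ (L - k) := by
  have hsub : Bad g c ε ∩ sphere m L ⊆ recon '' SL g c ε L := by
    rintro w ⟨⟨u, v, u', he, h1, h2, h3⟩, hw⟩
    exact decomp g c ε L w hw u v u' he h1 h2 h3
  calc ((Bad g c ε) ∩ sphere m L).ncard
      ≤ (recon '' SL g c ε L).ncard :=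
        Set.ncard_le_ncard hsub ((SL_finite g c ε L).image _)
    _ ≤ (SL g c ε L).ncard := Set.ncard_image_le (SL_finite g c ε L)
    _ ≤ _ := SL_card_le g c ε L

lemma bad_ball_card_le {m : ℕ} (g : Fin m → G) (c ε : ℝ) (n : ℕ) :
    ((Bad g c ε) ∩ ball m n).ncard ≤
      ∑ L ∈ Finset.range (n + 1), ((Bad g c ε) ∩ sphere m L).ncard := by
  have hE : Bad g c ε ∩ ball m n =
      ⋃ L ∈ Finset.range (n + 1), (Bad g c ε ∩ sphere m L) := by
    ext w
    constructor
    · rintro ⟨hb, hw⟩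
      refine Set.mem_biUnion ?_ ⟨hb, rfl⟩
      show w.length ∈ Finset.range (n + 1)
      rw [Finset.mem_range, Nat.lt_succ_iff]
      exact hw
    · intro hw
      obtain ⟨L, hL, hb, hs⟩ := Set.mem_iUnion₂.1 hw
      refine ⟨hb, ?_⟩
      show w.length ≤ n
      rw [hs]
      have : L ∈ Finset.range (n + 1) := hL
      rw [Finset.mem_range, Nat.lt_succ_iff] at this
      exact this
  rw [hE]
  exact ncard_biUnion_le _ _

/-- Per-`k` real bound. -/
lemma badV_real_bound {m : ℕ} (hm : 2 ≤ m) (g : Fin m → G) {c θ' η ε' : ℝ} {N₀ : ℕ}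
    (hc : 0 ≤ c) (hθ'0 : 0 ≤ θ') (hη : 0 ≤ η) (hθ'c : θ' * (1 + c) ≤ 1 - η)
    (hN : ∀ j : ℕ, N₀ ≤ j → ((V g j).ncard : ℝ) ≤ (2 * m : ℝ) ^ (θ' * j))
    {L k : ℕ} (hk : k ≤ L) (hL : (N₀ : ℝ) ≤ ε' * L) :
    ((BadV g c (ε' * L) k).ncard : ℝ) * ((2 * m) ^ (L - k) : ℕ) ≤
      (c * L + 1) * (2 * m : ℝ) ^ ((L : ℝ) - η * (ε' * L)) := by
  have hb1 : (1 : ℝ) ≤ 2 * m := by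
    have : (2 : ℝ) ≤ m := by exact_mod_cast hm
    nlinarith
  have hb0 : (0 : ℝ) < 2 * m := by linarith
  rcases Set.eq_empty_or_nonempty (BadV g c (ε' * L) k) with hBe | ⟨v, hv⟩
  · rw [hBe]
    simp only [Set.ncard_empty, Nat.cast_zero, zero_mul]
    positivity
  -- nonempty : ε'L ≤ k, so N₀ ≤ k
  have hklo : ε' * L ≤ (k : ℝ) := hv.2.1
  have hkN : (N₀ : ℝ) ≤ (k : ℝ) := le_trans hL hklo
  have hkN' : N₀ ≤ k := by exact_mod_cast hkN
  have hstep1 : ((BadV g c (ε' * L) k).ncard : ℝ) ≤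
      ∑ l ∈ Finset.range (⌊c * k⌋₊ + 1), ((V g (k + l)).ncard : ℝ) := by
    rw [← Nat.cast_sum]
    exact_mod_cast BadV_card_le g c (ε' * L) k
  have hstep2 : ∀ l ∈ Finset.range (⌊c * k⌋₊ + 1),
      ((V g (k + l)).ncard : ℝ) ≤ (2 * m : ℝ) ^ ((1 - η) * k) := by
    intro l hl
    rw [Finset.mem_range, Nat.lt_succ_iff] at hl
    have hlck : (l : ℝ) ≤ c * k := le_trans (by exact_mod_cast hl) (Nat.floor_le (by positivity))
    calc ((V g (k + l)).ncard : ℝ) ≤ (2 * m : ℝ) ^ (θ' * (k + l : ℕ)) :=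
          hN (k + l) (le_trans hkN' (Nat.le_add_right _ _))
      _ ≤ (2 * m : ℝ) ^ ((1 - η) * k) := by
          apply Real.rpow_le_rpow_of_exponent_le hb1
          push_cast
          calc θ' * ((k : ℝ) + l) ≤ θ' * ((k : ℝ) + c * k) := by nlinarith
            _ = θ' * (1 + c) * k := by ring
            _ ≤ (1 - η) * k := by
                have : (0:ℝ) ≤ (k : ℝ) := Nat.cast_nonneg k
                nlinarith
  have hsum : ((BadV g c (ε' * L) k).ncard : ℝ) ≤
      (c * L + 1) * (2 * m : ℝ) ^ ((1 - η) * k) := by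
    calc ((BadV g c (ε' * L) k).ncard : ℝ)
        ≤ ∑ l ∈ Finset.range (⌊c * k⌋₊ + 1), ((V g (k + l)).ncard : ℝ) := hstep1
      _ ≤ (⌊c * k⌋₊ + 1 : ℕ) * (2 * m : ℝ) ^ ((1 - η) * k) := by
          have := Finset.sum_le_card_nsmul _ _ _ hstep2
          simpa [nsmul_eq_mul, Finset.card_range] using this
      _ ≤ (c * L + 1) * (2 * m : ℝ) ^ ((1 - η) * k) := by
          have h1 : ((⌊c * k⌋₊ + 1 : ℕ) : ℝ) ≤ c * L + 1 := by
            push_cast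
            have h2 : (⌊c * k⌋₊ : ℝ) ≤ c * k := Nat.floor_le (by positivity)
            have h3 : c * k ≤ c * L := by
              have : (k:ℝ) ≤ L := by exact_mod_cast hk
              nlinarith
            linarith
          have h4 : (0:ℝ) ≤ (2 * m : ℝ) ^ ((1 - η) * k) := le_of_lt (Real.rpow_pos_of_pos hb0 _)
          exact mul_le_mul_of_nonneg_right h1 h4
  have hpow : (((2 * m) ^ (L - k) : ℕ) : ℝ) = (2 * m : ℝ) ^ ((L : ℝ) - k) := by
    push_cast
    rw [← Real.rpow_natCast (2 * (m:ℝ)) (L - k)]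
    congr 1
    have : (k:ℝ) ≤ L := by exact_mod_cast hk
    push_cast [Nat.cast_sub hk]
    ring
  rw [hpow]
  calc ((BadV g c (ε' * L) k).ncard : ℝ) * (2 * m : ℝ) ^ ((L : ℝ) - k)
      ≤ ((c * L + 1) * (2 * m : ℝ) ^ ((1 - η) * k)) * (2 * m : ℝ) ^ ((L : ℝ) - k) := by
        apply mul_le_mul_of_nonneg_right hsum (le_of_lt (Real.rpow_pos_of_pos hb0 _))
    _ = (c * L + 1) * (2 * m : ℝ) ^ ((1 - η) * k + ((L : ℝ) - k)) := by
        rw [mul_assoc, ← Real.rpow_add hb0]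
    _ ≤ (c * L + 1) * (2 * m : ℝ) ^ ((L : ℝ) - η * (ε' * L)) := by
        have hL0 : (0:ℝ) ≤ (L:ℝ) := Nat.cast_nonneg L
        have h5 : (1 - η) * k + ((L : ℝ) - k) = (L : ℝ) - η * k := by ring
        rw [h5]
        apply mul_le_mul_of_nonneg_left _ (by nlinarith)
        apply Real.rpow_le_rpow_of_exponent_le hb1
        have : η * (ε' * L) ≤ η * k := by nlinarith
        linarith



lemma bad_sphere_real_bound {m : ℕ} (hm : 2 ≤ m) (g : Fin m → G) {c θ' η ε' : ℝ} {N₀ : ℕ}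
    (hc : 0 ≤ c) (hθ'0 : 0 ≤ θ') (hη : 0 ≤ η) (hθ'c : θ' * (1 + c) ≤ 1 - η)
    (hN : ∀ j : ℕ, N₀ ≤ j → ((V g j).ncard : ℝ) ≤ (2 * m : ℝ) ^ (θ' * j))
    {L : ℕ} (hL : (N₀ : ℝ) ≤ ε' * L) :
    (((Bad g c ε') ∩ sphere m L).ncard : ℝ) ≤
      2 * (L + 1) * ((L + 1) * ((c * L + 1) * (2 * m : ℝ) ^ ((1 - η * ε') * L))) := by
  have hb0 : (0 : ℝ) < 2 * m := by
    have : (2:ℝ) ≤ m := by exact_mod_cast hm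
    nlinarith
  have hcast : (((Bad g c ε') ∩ sphere m L).ncard : ℝ) ≤
      2 * ((L : ℝ) + 1) * ∑ k ∈ Finset.range (L + 1),
        ((BadV g c (ε' * L) k).ncard : ℝ) * (((2 * m) ^ (L - k) : ℕ) : ℝ) := by
    have h1 := bad_sphere_card_le g c ε' L
    have h2 : ((2 * (L + 1) * ∑ k ∈ Finset.range (L + 1),
        (BadV g c (ε' * L) k).ncard * (2 * m) ^ (L - k) : ℕ) : ℝ) =
        2 * ((L : ℝ) + 1) * ∑ k ∈ Finset.range (L + 1),
        ((BadV g c (ε' * L) k).ncard : ℝ) * (((2 * m) ^ (L - k) : ℕ) : ℝ) := by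
      push_cast
      ring
    rw [← h2]
    exact_mod_cast h1
  refine le_trans hcast ?_
  have hsum : ∑ k ∈ Finset.range (L + 1),
      ((BadV g c (ε' * L) k).ncard : ℝ) * (((2 * m) ^ (L - k) : ℕ) : ℝ) ≤
      ((L : ℝ) + 1) * ((c * L + 1) * (2 * m : ℝ) ^ ((1 - η * ε') * L)) := by
    have hterm : ∀ k ∈ Finset.range (L + 1),
        ((BadV g c (ε' * L) k).ncard : ℝ) * (((2 * m) ^ (L - k) : ℕ) : ℝ) ≤
        (c * L + 1) * (2 * m : ℝ) ^ ((1 - η * ε') * L) := by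
      intro k hk
      rw [Finset.mem_range, Nat.lt_succ_iff] at hk
      have := badV_real_bound hm g hc hθ'0 hη hθ'c hN hk hL
      have hexp : (L : ℝ) - η * (ε' * L) = (1 - η * ε') * L := by ring
      rw [hexp] at this
      exact this
    have := Finset.sum_le_card_nsmul _ _ _ hterm
    simpa [nsmul_eq_mul, Finset.card_range] using this
  have h2L : (0:ℝ) ≤ 2 * ((L : ℝ) + 1) := by positivity
  calc 2 * ((L : ℝ) + 1) * ∑ k ∈ Finset.range (L + 1),
        ((BadV g c (ε' * L) k).ncard : ℝ) * (((2 * m) ^ (L - k) : ℕ) : ℝ)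
      ≤ 2 * ((L : ℝ) + 1) * (((L : ℝ) + 1) * ((c * L + 1) * (2 * m : ℝ) ^ ((1 - η * ε') * L))) :=
        mul_le_mul_of_nonneg_left hsum h2L
    _ = _ := by push_cast; ring

open Topology in
lemma tendsto_poly_geo (C : ℝ) (k : ℕ) {r : ℝ} (h0 : 0 < r) (h1 : r < 1) :
    Tendsto (fun n : ℕ => C * ((n : ℝ) + 1) ^ k * r ^ n) atTop (𝓝 0) := by
  have hs : Summable (fun n : ℕ => ((n : ℝ)) ^ k * r ^ n) :=
    summable_pow_mul_geometric_of_norm_lt_one k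
      (by rw [Real.norm_eq_abs, abs_of_pos h0]; exact h1)
  have hs2 : Summable (fun n : ℕ => ((n : ℝ) + 1) ^ k * r ^ (n + 1)) := by
    have h := (summable_nat_add_iff 1).2 hs
    refine h.congr (fun n => ?_)
    push_cast
    ring
  have ht := hs2.tendsto_atTop_zero
  have ht2 := ht.const_mul (C / r)
  rw [mul_zero] at ht2
  refine ht2.congr (fun n => ?_)
  have hr : r ≠ 0 := ne_of_gt h0
  field_simp
  ring

open Topology in
lemma eventually_poly_geo_le_one (C : ℝ) (k : ℕ) {r : ℝ} (h0 : 0 < r) (h1 : r < 1) :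
    ∀ᶠ n : ℕ in atTop, C * ((n : ℝ) + 1) ^ k * r ^ n ≤ 1 := by
  have h := tendsto_poly_geo C k h0 h1
  have := h.eventually (eventually_le_nhds (by norm_num : (0:ℝ) < 1))
  exact this



lemma poly_le_geo (C : ℝ) (k : ℕ) {x a : ℝ} (hx : 1 < x) (ha : 0 < a) :
    ∀ᶠ n : ℕ in atTop, C * ((n : ℝ) + 1) ^ k ≤ x ^ (a * n) := by
  have hx0 : (0:ℝ) < x := lt_trans one_pos hx
  have hr0 : (0:ℝ) < x ^ (-a) := Real.rpow_pos_of_pos hx0 _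
  have hr1 : x ^ (-a) < 1 := Real.rpow_lt_one_of_one_lt_of_neg hx (by linarith)
  filter_upwards [eventually_poly_geo_le_one C k hr0 hr1] with n h
  have hXpos : (0:ℝ) < x ^ (a * n) := Real.rpow_pos_of_pos hx0 _
  have hrX : (x ^ (-a)) ^ n * x ^ (a * n) = 1 := by
    rw [← Real.rpow_natCast (x ^ (-a)) n, ← Real.rpow_mul (le_of_lt hx0),
      ← Real.rpow_add hx0]
    rw [show -a * n + a * n = 0 by ring, Real.rpow_zero]
  calc C * ((n : ℝ) + 1) ^ k = (C * ((n : ℝ) + 1) ^ k * (x ^ (-a)) ^ n) * x ^ (a * n) := by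
        rw [mul_assoc, hrX, mul_one]
    _ ≤ 1 * x ^ (a * n) := mul_le_mul_of_nonneg_right h (le_of_lt hXpos)
    _ = x ^ (a * n) := one_mul _


set_option maxHeartbeats 1000000 in
lemma main_neg {m : ℕ} (hm : 2 ≤ m) (g : Fin m → G)
    (hθ : cogrowth g < 1) {ε : ℝ} (hε : 0 < ε) (hε1 : ε ≤ 1)
    (hc : 0 < (1 - cogrowth g) / cogrowth g - ε) :
    ExpNegligible (Bad g ((1 - cogrowth g) / cogrowth g - ε) ε) := by
  have hb1 : (1 : ℝ) < 2 * m := by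
    have : (2:ℝ) ≤ m := by exact_mod_cast hm
    nlinarith
  have hb0 : (0 : ℝ) < 2 * m := by linarith
  set θ := cogrowth g with hθdef
  set c := (1 - θ) / θ - ε with hcdef
  have hθ0 : 0 < θ := by
    by_contra h
    push_neg at h
    have h1 : (1 - θ) / θ ≤ 0 := by
      rcases h.lt_or_eq with h' | h'
      · exact le_of_lt (div_neg_of_pos_of_neg (by linarith) h')
      · rw [h', div_zero]
    rw [hcdef] at hc
    linarith
  have hc0 : (0:ℝ) ≤ c := le_of_lt hc
  have h1c : 1 + c = 1/θ - ε := by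
    rw [hcdef]
    field_simp
    ring
  have h1cpos : (0:ℝ) < 1 + c := by linarith
  set η := θ * ε / 2 with hηdef
  have hη0 : 0 < η := by positivity
  set θ' := θ + θ * ε / (2 * (1 + c)) with hθ'def
  have hθθ' : θ < θ' := by
    have : 0 < θ * ε / (2 * (1 + c)) := by positivity
    rw [hθ'def]
    linarith
  have hθ'0 : (0:ℝ) ≤ θ' := by linarith
  have hθ1c : θ * (1 + c) = 1 - θ * ε := by
    rw [h1c]
    field_simp
  have hkey : θ' * (1 + c) ≤ 1 - η := by
    have e1 : θ * ε / (2 * (1 + c)) * (1 + c) = θ * ε / 2 := by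
      field_simp
    have e2 : θ' * (1 + c) = θ * (1 + c) + θ * ε / (2 * (1 + c)) * (1 + c) := by
      rw [hθ'def, add_mul]
    rw [e2, e1, hθ1c, hηdef]
    linarith
  have hηε1 : η * ε < 1 := by
    rw [hηdef]
    nlinarith
  have hηε0 : 0 < η * ε := by positivity
  obtain ⟨N₀, hN₀⟩ := eventually_atTop.1 (eventually_V_bound hm g (show cogrowth g < θ' by
    rw [← hθdef]; exact hθθ'))
  obtain ⟨L₀, hL₀⟩ := exists_nat_ge ((N₀ : ℝ) / ε)
  have hLstep : ∀ L : ℕ, L₀ ≤ L → (N₀ : ℝ) ≤ ε * L := by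
    intro L hL
    rw [div_le_iff₀ hε] at hL₀
    have h2 : (L₀ : ℝ) ≤ L := by exact_mod_cast hL
    nlinarith
  set C₀ : ℝ := (2 * m : ℝ) ^ (L₀ : ℕ) with hC₀def
  have hC₀0 : 0 < C₀ := by positivity
  -- per-sphere bound, all L ≤ n
  have key1 : ∀ n L : ℕ, L ≤ n → (((Bad g c ε) ∩ sphere m L).ncard : ℝ) ≤
      C₀ + 2 * ((n:ℝ) + 1) * (((n:ℝ) + 1) * ((c * n + 1) * (2 * m : ℝ) ^ ((1 - η * ε) * n))) := by
    intro n L hLn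
    have hBpos : (0:ℝ) ≤
        2 * ((n:ℝ) + 1) * (((n:ℝ) + 1) * ((c * n + 1) * (2 * m : ℝ) ^ ((1 - η * ε) * n))) := by
      have : (0:ℝ) ≤ c * n + 1 := by positivity
      positivity
    rcases lt_or_ge L L₀ with hL | hL
    · have h1 : (((Bad g c ε) ∩ sphere m L).ncard : ℝ) ≤ ((2 * m) ^ L : ℕ) := by
        have := Set.ncard_le_ncard
          (Set.inter_subset_right (s := Bad g c ε) (t := sphere m L)) (sphere_finite m L)
        rw [ncard_sphere m L] at this
        exact_mod_cast this
      have h2 : (((2 * m) ^ L : ℕ) : ℝ) ≤ C₀ := by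
        rw [hC₀def]
        push_cast
        apply pow_le_pow_right₀ (le_of_lt hb1) (le_of_lt hL)
      linarith
    · have hNL := hLstep L hL
      have h3 := bad_sphere_real_bound hm g hc0 hθ'0 (le_of_lt hη0) hkey hN₀ hNL
      refine le_trans h3 ?_
      have hmono : 2 * ((L:ℝ) + 1) * (((L:ℝ) + 1) * ((c * L + 1) *
          (2 * m : ℝ) ^ ((1 - η * ε) * L))) ≤
          2 * ((n:ℝ) + 1) * (((n:ℝ) + 1) * ((c * n + 1) *
          (2 * m : ℝ) ^ ((1 - η * ε) * n))) := by
        have hLn' : (L:ℝ) ≤ n := by exact_mod_cast hLn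
        gcongr <;> first
          | exact le_of_lt hb1
          | nlinarith
      linarith
  -- ball bound
  have key2 : ∀ n : ℕ, (((Bad g c ε) ∩ ball m n).ncard : ℝ) ≤
      ((n:ℝ) + 1) * (C₀ + 2 * ((n:ℝ) + 1) * (((n:ℝ) + 1) * ((c * n + 1) *
        (2 * m : ℝ) ^ ((1 - η * ε) * n)))) := by
    intro n
    have h1 : (((Bad g c ε) ∩ ball m n).ncard : ℝ) ≤
        ∑ L ∈ Finset.range (n + 1), (((Bad g c ε) ∩ sphere m L).ncard : ℝ) := by
      rw [← Nat.cast_sum]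
      exact_mod_cast bad_ball_card_le g c ε n
    refine le_trans h1 ?_
    have h2 := Finset.sum_le_card_nsmul (Finset.range (n+1))
      (fun L => (((Bad g c ε) ∩ sphere m L).ncard : ℝ)) _
      (fun L hL => key1 n L (by rw [Finset.mem_range, Nat.lt_succ_iff] at hL; exact hL))
    rw [Finset.card_range, nsmul_eq_mul] at h2
    push_cast at h2 ⊢
    exact h2
  -- final assembly
  set α : ℝ := (2 * m : ℝ) ^ (-(η * ε / 2)) with hαdef
  have hα0 : 0 < α := Real.rpow_pos_of_pos hb0 _
  have hα1 : α < 1 := Real.rpow_lt_one_of_one_lt_of_neg hb1 (by linarith)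
  refine ⟨α, hα0, hα1, ?_⟩
  have hgeo := poly_le_geo (C₀ + 2 * (c + 1)) 4 hb1 (show 0 < η * ε / 2 by linarith)
  filter_upwards [hgeo] with n hn
  have hy1 : (1:ℝ) ≤ (n:ℝ) + 1 := by
    have : (0:ℝ) ≤ (n:ℝ) := Nat.cast_nonneg n
    linarith
  set X : ℝ := (2 * m : ℝ) ^ ((1 - η * ε) * (n:ℝ)) with hXdef
  have hX1 : (1:ℝ) ≤ X := by
    rw [hXdef]
    apply Real.one_le_rpow (le_of_lt hb1)
    have : (0:ℝ) ≤ (n:ℝ) := Nat.cast_nonneg n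
    nlinarith
  have hX0 : (0:ℝ) ≤ X := by linarith
  have P1 : ((n:ℝ)+1) * (C₀ + 2*((n:ℝ)+1)*(((n:ℝ)+1)*((c*(n:ℝ)+1)*X))) ≤
      (C₀ + 2*(c+1)) * ((n:ℝ)+1)^4 * X := by
    have hn0 : (0:ℝ) ≤ (n:ℝ) := Nat.cast_nonneg n
    calc ((n:ℝ)+1) * (C₀ + 2*((n:ℝ)+1)*(((n:ℝ)+1)*((c*(n:ℝ)+1)*X)))
        = C₀*((n:ℝ)+1) + 2*(c*(n:ℝ)+1)*((n:ℝ)+1)^3*X := by ring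
      _ ≤ C₀*(((n:ℝ)+1)^4*X) + 2*((c+1)*((n:ℝ)+1))*((n:ℝ)+1)^3*X := by
          gcongr
          · calc ((n:ℝ)+1) = ((n:ℝ)+1)^1 := (pow_one _).symm
              _ ≤ ((n:ℝ)+1)^4 := pow_le_pow_right₀ hy1 (by norm_num)
              _ ≤ ((n:ℝ)+1)^4 * X := le_mul_of_one_le_right (by positivity) hX1
          · nlinarith
      _ = (C₀ + 2*(c+1)) * ((n:ℝ)+1)^4 * X := by ring
  have P3 : (C₀ + 2*(c+1)) * ((n:ℝ)+1)^4 * X ≤ (2*m:ℝ)^((η * ε / 2) * (n:ℝ)) * X :=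
    mul_le_mul_of_nonneg_right hn hX0
  have P4 : (2*m:ℝ)^((η * ε / 2) * (n:ℝ)) * X = α ^ n * (2*m:ℝ)^(n:ℕ) := by
    rw [hXdef, hαdef, ← Real.rpow_add hb0, ← Real.rpow_natCast ((2*m:ℝ) ^ (-(η * ε / 2))) n,
      ← Real.rpow_mul (le_of_lt hb0), ← Real.rpow_natCast (2*(m:ℝ)) n,
      ← Real.rpow_add hb0]
    congr 1
    ring
  have hnum : (((Bad g c ε) ∩ ball m n).ncard : ℝ) ≤ α ^ n * (2*m:ℝ)^(n:ℕ) := by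
    rw [← P4]
    exact le_trans (key2 n) (le_trans P1 P3)
  have hden : (2*m:ℝ)^(n:ℕ) ≤ ((ball m n).ncard : ℝ) := by
    have := ball_card_lower m n
    exact_mod_cast this
  have hdenpos : (0:ℝ) < (2*m:ℝ)^(n:ℕ) := by positivity
  calc (((Bad g c ε) ∩ ball m n).ncard : ℝ) / ((ball m n).ncard : ℝ)
      ≤ (α ^ n * (2*m:ℝ)^(n:ℕ)) / ((2*m:ℝ)^(n:ℕ)) := by
        apply div_le_div₀ (by positivity) hnum hdenpos hden
    _ = α ^ n := by field_simp



lemma expNegligible_mono {m : ℕ} {X Y : Set (Word m)} (hXY : X ⊆ Y) (hY : ExpNegligible Y) :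
    ExpNegligible X := by
  obtain ⟨α, h0, h1, hev⟩ := hY
  refine ⟨α, h0, h1, ?_⟩
  filter_upwards [hev] with n hn
  refine le_trans ?_ hn
  have hc : ((X ∩ ball m n).ncard : ℝ) ≤ ((Y ∩ ball m n).ncard : ℝ) := by
    have := Set.ncard_le_ncard (Set.inter_subset_inter_left _ hXY)
      ((ball_finite m n).subset Set.inter_subset_right)
    exact_mod_cast this
  rcases eq_or_lt_of_le (Nat.cast_nonneg ((ball m n).ncard) : (0:ℝ) ≤ _) with hd | hd
  · rw [← hd]
    simp
  · exact div_le_div₀ (Nat.cast_nonneg _) hc hd le_rfl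

theorem generic_subword_of_square_length_lower_bound' (m : ℕ) (hm : 2 ≤ m)
    (g : Fin m → G) (hsurj : Function.Surjective (eval g))
    (hθ : cogrowth g < 1) (ε : ℝ) (hε : 0 < ε) :
    ExpGeneric {w : Word m | ∀ u v u' : Word m, w ++ w = u ++ v ++ u' →
      v.length ≤ w.length → ε * (w.length : ℝ) ≤ (v.length : ℝ) →
      ((1 - cogrowth g) / cogrowth g - ε) * (v.length : ℝ) ≤ (wlen g (eval g v) : ℝ)} := by
  classical
  by_cases hcase : (1 - cogrowth g) / cogrowth g - ε ≤ 0
  · have huniv : {w : Word m | ∀ u v u' : Word m, w ++ w = u ++ v ++ u' →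
        v.length ≤ w.length → ε * (w.length : ℝ) ≤ (v.length : ℝ) →
        ((1 - cogrowth g) / cogrowth g - ε) * (v.length : ℝ) ≤ (wlen g (eval g v) : ℝ)} =
        Set.univ := by
      ext w
      simp only [Set.mem_setOf_eq, Set.mem_univ, iff_true]
      intro u v u' _ _ _
      have h1 : ((1 - cogrowth g) / cogrowth g - ε) * (v.length : ℝ) ≤ 0 :=
        mul_nonpos_of_nonpos_of_nonneg hcase (Nat.cast_nonneg _)
      exact le_trans h1 (Nat.cast_nonneg _)
    show ExpNegligible _
    rw [huniv, Set.compl_univ]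
    refine ⟨1/2, by norm_num, by norm_num, Filter.Eventually.of_forall fun n => ?_⟩
    rw [Set.empty_inter]
    simp only [Set.ncard_empty, Nat.cast_zero, zero_div]
    positivity
  · push_neg at hcase
    set ε' := min ε 1 with hε'def
    have hε'0 : 0 < ε' := lt_min hε one_pos
    have hε'1 : ε' ≤ 1 := min_le_right _ _
    have hε'ε : ε' ≤ ε := min_le_left _ _
    have hc' : 0 < (1 - cogrowth g) / cogrowth g - ε' := by
      have := sub_le_sub_left hε'ε ((1 - cogrowth g) / cogrowth g)
      linarith
    have hneg := main_neg hm g hθ hε'0 hε'1 hc'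
    refine expNegligible_mono ?_ hneg
    intro w hw
    simp only [Set.mem_compl_iff, Set.mem_setOf_eq] at hw
    push_neg at hw
    obtain ⟨u, v, u', h1, h2, h3, h4⟩ := hw
    refine ⟨u, v, u', h1, h2, ?_, ?_⟩
    · refine le_trans ?_ h3
      have : (0:ℝ) ≤ (w.length : ℝ) := Nat.cast_nonneg _
      nlinarith
    · refine lt_of_lt_of_le h4 ?_
      have : (0:ℝ) ≤ (v.length : ℝ) := Nat.cast_nonneg _
      nlinarith

/-- Lemma `quasi`(2): if `G` is non-amenable (`θ < 1`), then for every
`ε > 0` the set of words `w` such that every contiguous subword `v` of `ww` with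
`|w| ≥ |v| ≥ ε|w|` satisfies `|v̄| ≥ ((1-θ)/θ - ε)|v|` is exponentially generic. -/
theorem generic_subword_of_square_length_lower_bound (m : ℕ) (hm : 2 ≤ m) {G : Type*} [Group G]
    (g : Fin m → G) (hsurj : Function.Surjective (eval g))
    (hθ : cogrowth g < 1) (ε : ℝ) (hε : 0 < ε) :
    ExpGeneric {w : Word m | ∀ u v u' : Word m, w ++ w = u ++ v ++ u' →
      v.length ≤ w.length → ε * (w.length : ℝ) ≤ (v.length : ℝ) →
      ((1 - cogrowth g) / cogrowth g - ε) * (v.length : ℝ) ≤ (wlen g (eval g v) : ℝ)} := by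
  exact generic_subword_of_square_length_lower_bound' m hm g hsurj hθ ε hε

end GenericSubgroups
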